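/- For bipartite Brauer operators ρ(η,β) on C^d ⊗ C^d, the set of local-positive operators equals the set of convex combinations of a state-positive Brauer operator and a channel-positive Brauer operator (decomposability within the Brauer family). -/

import Mathlib

open Matrix Kronecker BigOperators
open scoped ComplexOrder

/-- The swap operator `V = ∑ i j, |ij⟩⟨ji|` on `C^d ⊗ C^d`. -/
noncomputable def swapOp (d : ℕ) : Matrix (Fin d × Fin d) (Fin d × Fin d) ℂ :=
  fun p q => if p.1 = q.2 ∧ p.2 = q.1 then 1 else 0

/-- Partial transpose on the first tensor factor. -/
noncomputable def ptransposeA {d : ℕ} (ρ : Matrix (Fin d × Fin d) (Fin d × Fin d) ℂ) :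
    Matrix (Fin d × Fin d) (Fin d × Fin d) ℂ :=
  fun p q => ρ (q.1, p.2) (p.1, q.2)

/-- The Brauer operator `ρ(η,β) = (1−η−β) I/d² + η V/d + β V^{T_A}/d`. -/
noncomputable def brauer (d : ℕ) (η β : ℝ) : Matrix (Fin d × Fin d) (Fin d × Fin d) ℂ :=
  ((1 - η - β) / (d : ℝ)^2) • (1 : Matrix (Fin d × Fin d) (Fin d × Fin d) ℂ)
    + (η / (d : ℝ)) • swapOp d + (β / (d : ℝ)) • ptransposeA (swapOp d)

/-- Local-positivity (block-positivity) of a bipartite operator. -/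
noncomputable def LocalPositive {d : ℕ} (M : Matrix (Fin d × Fin d) (Fin d × Fin d) ℂ) : Prop :=
  ∀ ψ φ : Fin d → ℂ,
    0 ≤ star (fun p : Fin d × Fin d => ψ p.1 * φ p.2) ⬝ᵥ
          M *ᵥ (fun p : Fin d × Fin d => ψ p.1 * φ p.2)

/-! ### Auxiliary lemmas -/

lemma brauer_apply (d : ℕ) (η β : ℝ) (p q : Fin d × Fin d) :
    brauer d η β p q = (((1 - η - β) / (d : ℝ)^2 : ℝ) : ℂ) * (if p = q then 1 else 0)
      + ((η / (d:ℝ) : ℝ) : ℂ) * (if p.1 = q.2 ∧ p.2 = q.1 then 1 else 0)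
      + ((β / (d:ℝ) : ℝ) : ℂ) * (if p.1 = p.2 ∧ q.1 = q.2 then 1 else 0) := by
  simp only [brauer, Matrix.add_apply, Matrix.smul_apply, Matrix.one_apply, swapOp, ptransposeA,
    Complex.real_smul, smul_eq_mul]
  rw [show (if q.1 = q.2 ∧ p.2 = p.1 then (1:ℂ) else 0)
      = (if p.1 = p.2 ∧ q.1 = q.2 then (1:ℂ) else 0) from if_congr (by tauto) rfl rfl]

lemma brauer_combo (d : ℕ) (t s η₁ β₁ η₂ β₂ η β : ℝ) (hts : t + s = 1)
    (hη : t * η₁ + s * η₂ = η) (hβ : t * β₁ + s * β₂ = β) :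
    brauer d η β = t • brauer d η₁ β₁ + s • brauer d η₂ β₂ := by
  ext p q
  simp only [Matrix.add_apply, Matrix.smul_apply, brauer_apply, Complex.real_smul]
  subst hη hβ
  have h1 : (s:ℝ) = 1 - t := by linarith
  subst h1
  push_cast
  ring

lemma ptransposeA_brauer (d : ℕ) (η β : ℝ) :
    ptransposeA (brauer d η β) = brauer d β η := by
  ext p q
  simp only [ptransposeA, brauer_apply]
  rw [show (if (q.1, p.2) = (p.1, q.2) then (1:ℂ) else 0) = (if p = q then (1:ℂ) else 0) from
      if_congr (by simp [Prod.ext_iff]; tauto) rfl rfl,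
    show (if (q.1, p.2).1 = (p.1, q.2).2 ∧ (q.1, p.2).2 = (p.1, q.2).1 then (1:ℂ) else 0)
      = (if p.1 = p.2 ∧ q.1 = q.2 then (1:ℂ) else 0) from if_congr (by simp; tauto) rfl rfl,
    show (if (q.1, p.2).1 = (q.1, p.2).2 ∧ (p.1, q.2).1 = (p.1, q.2).2 then (1:ℂ) else 0)
      = (if p.1 = q.2 ∧ p.2 = q.1 then (1:ℂ) else 0) from if_congr (by simp; tauto) rfl rfl]
  ring_nf

lemma psd_real_smul {n : Type*} [Fintype n] [DecidableEq n] {M : Matrix n n ℂ}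
    (hM : M.PosSemidef) {r : ℝ} (hr : 0 ≤ r) : (r • M).PosSemidef := by
  refine Matrix.PosSemidef.of_dotProduct_mulVec_nonneg ?_ ?_
  · unfold Matrix.IsHermitian
    rw [conjTranspose_smul, hM.1.eq, star_trivial]
  · intro x
    have h := hM.dotProduct_mulVec_nonneg x
    rw [smul_mulVec, dotProduct_smul]
    have heq : (r • (star x ⬝ᵥ M *ᵥ x)) = (r : ℂ) * (star x ⬝ᵥ M *ᵥ x) := Complex.real_smul
    rw [heq]
    exact mul_nonneg (by exact_mod_cast Complex.zero_le_real.mpr hr) h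

lemma swapOp_mul_swapOp (d : ℕ) : swapOp d * swapOp d = 1 := by
  ext p q
  rw [Matrix.mul_apply]
  rw [Finset.sum_eq_single (p.2, p.1)]
  · simp [swapOp, Matrix.one_apply, Prod.ext_iff, and_comm]
  · intro r _ hr
    simp only [swapOp]
    rw [if_neg]
    · simp
    · intro ⟨h1, h2⟩
      exact hr (by rw [Prod.ext_iff]; exact ⟨h2.symm, h1.symm⟩)
  · intro h; exact absurd (Finset.mem_univ _) h

lemma swapOp_conjTranspose (d : ℕ) : (swapOp d)ᴴ = swapOp d := by
  ext p q
  simp only [conjTranspose_apply, swapOp]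
  rw [show (if q.1 = p.2 ∧ q.2 = p.1 then (1:ℂ) else 0)
      = (if p.1 = q.2 ∧ p.2 = q.1 then (1:ℂ) else 0) from if_congr (by tauto) rfl rfl]
  split_ifs <;> simp

lemma psd_B1 (d : ℕ) : (brauer d 0 1).PosSemidef := by
  set A : Matrix (Fin 1) (Fin d × Fin d) ℂ :=
    Matrix.of (fun _ p => if p.1 = p.2 then (1:ℂ) else 0) with hA
  have key : brauer d 0 1 = ((1:ℝ)/d) • (Aᴴ * A) := by
    ext p q
    simp only [brauer_apply, Matrix.smul_apply, Matrix.mul_apply, conjTranspose_apply,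
      Complex.real_smul, Fin.sum_univ_one, hA, Matrix.of_apply]
    push_cast
    split_ifs <;> simp_all
  rw [key]
  exact psd_real_smul (posSemidef_conjTranspose_mul_self _) (by positivity)

lemma psd_B2 {d : ℕ} (hd : 2 ≤ d) : (brauer d (-1/((d:ℝ)-1)) 0).PosSemidef := by
  have hd2 : (2:ℝ) ≤ d := by exact_mod_cast hd
  have hd1 : ((d:ℝ) - 1) ≠ 0 := by linarith
  have hd0 : ((d:ℝ)) ≠ 0 := by linarith
  have hc1 : ((d:ℂ) - 1) ≠ 0 := by
    intro h
    exact hd1 (by exact_mod_cast congrArg Complex.re h)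
  have hc0 : ((d:ℂ)) ≠ 0 := by exact_mod_cast hd0
  have hsq : (1 - swapOp d)ᴴ * (1 - swapOp d) = (2:ℂ) • (1 - swapOp d) := by
    rw [conjTranspose_sub, conjTranspose_one, swapOp_conjTranspose]
    have h : (1 - swapOp d) * (1 - swapOp d)
        = 1 - swapOp d - swapOp d + swapOp d * swapOp d := by noncomm_ring
    rw [h, swapOp_mul_swapOp]
    ext p q
    simp only [Matrix.add_apply, Matrix.sub_apply, Matrix.smul_apply, smul_eq_mul]
    ring
  have key : brauer d (-1/((d:ℝ)-1)) 0
      = ((1/(2*(((d:ℝ)-1))*d)) : ℝ) • ((1 - swapOp d)ᴴ * (1 - swapOp d)) := by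
    rw [hsq]
    ext p q
    simp only [brauer_apply, Matrix.smul_apply, Matrix.sub_apply, Matrix.one_apply, swapOp,
      Complex.real_smul, smul_eq_mul]
    push_cast
    split_ifs <;> field_simp [hc0, hc1] <;> ring
  rw [key]
  refine psd_real_smul (posSemidef_conjTranspose_mul_self _) ?_
  apply one_div_nonneg.mpr
  nlinarith

lemma seg_psd {d : ℕ} (hd : 2 ≤ d) {α : ℝ} (h0 : 0 ≤ α) (h1 : α ≤ 1) :
    (brauer d (-(1-α)/((d:ℝ)-1)) α).PosSemidef := by
  have key : brauer d (-(1-α)/((d:ℝ)-1)) α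
      = α • brauer d 0 1 + (1-α) • brauer d (-1/((d:ℝ)-1)) 0 :=
    brauer_combo d α (1-α) 0 1 (-1/((d:ℝ)-1)) 0 _ _ (by ring) (by ring) (by ring)
  rw [key]
  exact (psd_real_smul (psd_B1 d) h0).add (psd_real_smul (psd_B2 hd) (by linarith))

def prodVec {d : ℕ} (ψ φ : Fin d → ℂ) : Fin d × Fin d → ℂ := fun p => ψ p.1 * φ p.2

section forms
variable {d : ℕ} (ψ φ : Fin d → ℂ)

lemma form_one :
    star (prodVec ψ φ) ⬝ᵥ (1 : Matrix (Fin d × Fin d) (Fin d × Fin d) ℂ) *ᵥ prodVec ψ φ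
      = (∑ i, starRingEnd ℂ (ψ i) * ψ i) * (∑ j, starRingEnd ℂ (φ j) * φ j) := by
  rw [Matrix.one_mulVec, Finset.sum_mul_sum]
  simp only [dotProduct, Pi.star_apply, Fintype.sum_prod_type, star_mul', prodVec,
    starRingEnd_apply]
  refine Finset.sum_congr rfl fun i _ => Finset.sum_congr rfl fun j _ => ?_
  ring

lemma form_swap :
    star (prodVec ψ φ) ⬝ᵥ swapOp d *ᵥ prodVec ψ φ
      = (∑ i, starRingEnd ℂ (ψ i) * φ i) * (∑ j, starRingEnd ℂ (φ j) * ψ j) := by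
  have hmv : ∀ p : Fin d × Fin d, (swapOp d *ᵥ prodVec ψ φ) p = ψ p.2 * φ p.1 := by
    intro p
    rw [mulVec, dotProduct, Finset.sum_eq_single (p.2, p.1)]
    · simp [swapOp, prodVec]
    · intro r _ hr
      have h0 : swapOp d p r = 0 := by
        simp only [swapOp]
        rw [if_neg]
        intro ⟨h1, h2⟩
        exact hr (by rw [Prod.ext_iff]; exact ⟨h2.symm, h1.symm⟩)
      rw [h0, zero_mul]
    · intro h; exact absurd (Finset.mem_univ _) h
  rw [dotProduct, Finset.sum_mul_sum]
  simp only [hmv, Pi.star_apply, star_mul', Fintype.sum_prod_type, prodVec, starRingEnd_apply]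
  refine Finset.sum_congr rfl fun i _ => Finset.sum_congr rfl fun j _ => ?_
  ring

lemma form_ptswap :
    star (prodVec ψ φ) ⬝ᵥ ptransposeA (swapOp d) *ᵥ prodVec ψ φ
      = (∑ i, starRingEnd ℂ (ψ i) * starRingEnd ℂ (φ i)) * (∑ j, ψ j * φ j) := by
  have hmv : ∀ p : Fin d × Fin d, (ptransposeA (swapOp d) *ᵥ prodVec ψ φ) p
      = (if p.1 = p.2 then (1:ℂ) else 0) * ∑ k, ψ k * φ k := by
    intro p
    rw [mulVec, dotProduct, Fintype.sum_prod_type, Finset.mul_sum]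
    refine Finset.sum_congr rfl fun i _ => ?_
    have hterm : ∀ j, ptransposeA (swapOp d) p (i, j) * prodVec ψ φ (i, j)
        = (if p.1 = p.2 then (1:ℂ) else 0) * (if i = j then ψ i * φ j else 0) := by
      intro j
      simp only [ptransposeA, swapOp, prodVec]
      split_ifs <;> simp_all
    simp only [hterm, ← Finset.mul_sum, Finset.sum_ite_eq, Finset.mem_univ, if_true]
  rw [dotProduct]
  simp only [hmv, Pi.star_apply, prodVec, star_mul', starRingEnd_apply]
  rw [Fintype.sum_prod_type, Finset.sum_mul]
  refine Finset.sum_congr rfl fun i _ => ?_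
  rw [Finset.sum_eq_single i]
  · simp
  · intro j _ hj
    have : ((i, j).1 = (i, j).2) = False := by simp [hj.symm]
    simp [this]
  · intro h; exact absurd (Finset.mem_univ _) h

lemma form_brauer (η β : ℝ) :
    star (prodVec ψ φ) ⬝ᵥ brauer d η β *ᵥ prodVec ψ φ
      = (((1 - η - β) / (d : ℝ)^2 : ℝ) : ℂ)
          * ((∑ i, starRingEnd ℂ (ψ i) * ψ i) * (∑ j, starRingEnd ℂ (φ j) * φ j))
        + ((η / (d:ℝ) : ℝ) : ℂ)
          * ((∑ i, starRingEnd ℂ (ψ i) * φ i) * (∑ j, starRingEnd ℂ (φ j) * ψ j))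
        + ((β / (d:ℝ) : ℝ) : ℂ)
          * ((∑ i, starRingEnd ℂ (ψ i) * starRingEnd ℂ (φ i)) * (∑ j, ψ j * φ j)) := by
  rw [brauer, add_mulVec, add_mulVec, smul_mulVec, smul_mulVec, smul_mulVec,
    dotProduct_add, dotProduct_add, dotProduct_smul, dotProduct_smul, dotProduct_smul,
    form_one, form_swap, form_ptswap]
  simp only [Complex.real_smul]
end forms

lemma sum_two {d : ℕ} {i0 i1 : Fin d} (h : i0 ≠ i1) (a b : ℂ) :
    ∑ i, (if i = i0 then a else if i = i1 then b else 0) = a + b := by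
  rw [Finset.sum_congr rfl (fun i _ => show (if i = i0 then a else if i = i1 then b else 0)
      = (if i = i0 then a else 0) + (if i = i1 then b else 0) by
        split_ifs with h1 h2 <;> simp_all)]
  rw [Finset.sum_add_distrib, Finset.sum_ite_eq', Finset.sum_ite_eq']
  simp

lemma form_ptA {d : ℕ} (M : Matrix (Fin d × Fin d) (Fin d × Fin d) ℂ) (ψ φ : Fin d → ℂ) :
    star (prodVec ψ φ) ⬝ᵥ M *ᵥ prodVec ψ φ
      = star (prodVec (star ψ) φ) ⬝ᵥ ptransposeA M *ᵥ prodVec (star ψ) φ := by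
  have expand : ∀ (N : Matrix (Fin d × Fin d) (Fin d × Fin d) ℂ) (v : Fin d × Fin d → ℂ),
      star v ⬝ᵥ N *ᵥ v = ∑ x : (Fin d × Fin d) × (Fin d × Fin d),
        star (v x.1) * N x.1 x.2 * v x.2 := by
    intro N v
    conv_rhs => rw [Fintype.sum_prod_type]
    rw [dotProduct]
    refine Finset.sum_congr rfl fun p _ => ?_
    rw [mulVec, dotProduct, Finset.mul_sum]
    refine Finset.sum_congr rfl fun q _ => ?_
    simp [Pi.star_apply]
    ring
  rw [expand M _, expand (ptransposeA M) _]
  refine Fintype.sum_equiv ⟨fun x => ((x.2.1, x.1.2), (x.1.1, x.2.2)),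
    fun x => ((x.2.1, x.1.2), (x.1.1, x.2.2)), fun x => rfl, fun x => rfl⟩ _ _ fun x => ?_
  simp only [Equiv.coe_fn_mk, ptransposeA, prodVec, Pi.star_apply, star_mul', star_star]
  ring

lemma localPositive_of_psd {d : ℕ} {M : Matrix (Fin d × Fin d) (Fin d × Fin d) ℂ}
    (h : M.PosSemidef) : LocalPositive M := fun ψ φ => h.dotProduct_mulVec_nonneg _

lemma localPositive_of_ptA_psd {d : ℕ} {M : Matrix (Fin d × Fin d) (Fin d × Fin d) ℂ}
    (h : (ptransposeA M).PosSemidef) : LocalPositive M := by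
  intro ψ φ
  show 0 ≤ star (prodVec ψ φ) ⬝ᵥ M *ᵥ prodVec ψ φ
  rw [form_ptA]
  exact h.dotProduct_mulVec_nonneg _

set_option maxHeartbeats 2000000 in
/-- Decomposability within the Brauer family: a Brauer operator is local-positive iff
it is a convex combination of a state-positive Brauer operator and a channel-positive
Brauer operator. -/
theorem stmt9 (d : ℕ) (hd : 2 ≤ d) (η β : ℝ) :
    LocalPositive (brauer d η β) ↔
      ∃ (t : ℝ) (η₁ β₁ η₂ β₂ : ℝ), 0 ≤ t ∧ t ≤ 1 ∧
        (brauer d η₁ β₁).PosSemidef ∧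
        (ptransposeA (brauer d η₂ β₂)).PosSemidef ∧
        brauer d η β = t • brauer d η₁ β₁ + (1 - t) • brauer d η₂ β₂ := by
  have hd2 : (2:ℝ) ≤ (d:ℝ) := by exact_mod_cast hd
  have hD0 : (0:ℝ) < d := by linarith
  have hD1 : (0:ℝ) < (d:ℝ) - 1 := by linarith
  constructor
  · -- forward direction
    intro hLP
    have hLP' : ∀ ψ φ : Fin d → ℂ,
        0 ≤ star (prodVec ψ φ) ⬝ᵥ brauer d η β *ᵥ prodVec ψ φ := hLP
    set i0 : Fin d := ⟨0, by omega⟩ with hi0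
    set i1 : Fin d := ⟨1, by omega⟩ with hi1
    have h01 : i0 ≠ i1 := by simp [hi0, hi1, Fin.ext_iff]
    -- generic sums
    have hconj : ∀ (a b : ℂ) (i : Fin d),
        starRingEnd ℂ (if i = i0 then a else if i = i1 then b else 0)
          = if i = i0 then starRingEnd ℂ a else if i = i1 then starRingEnd ℂ b else 0 := by
      intro a b i; split_ifs <;> simp
    have hsum : ∀ a b c e : ℂ,
        ∑ i, (if i = i0 then a else if i = i1 then b else 0)
            * (if i = i0 then c else if i = i1 then e else 0) = a*c + b*e := by
      intro a b c e
      rw [Finset.sum_congr rfl (fun i _ => show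
          (if i = i0 then a else if i = i1 then b else 0)
            * (if i = i0 then c else if i = i1 then e else 0)
          = (if i = i0 then a*c else if i = i1 then b*e else 0) by split_ifs <;> simp_all),
        sum_two h01]
    -- the four inequalities
    have hA : 0 ≤ 1 - η - β := by
      have h1 := hLP' (fun i => if i = i0 then 1 else if i = i1 then 0 else 0)
                      (fun i => if i = i0 then 0 else if i = i1 then 1 else 0)
      rw [form_brauer] at h1
      simp only [prodVec, hconj, hsum] at h1
      norm_num at h1
      rw [show (1 - (η:ℂ) - β)/(d:ℂ)^2 = (((1-η-β)/(d:ℝ)^2 : ℝ) : ℂ) by push_cast; ring,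
        Complex.zero_le_real] at h1
      have h2 : (0:ℝ) < (d:ℝ)^2 := by positivity
      have h3 := mul_nonneg h1 h2.le
      rwa [div_mul_cancel₀] at h3
      positivity
    have hD : 0 ≤ (1 - η - β) + (d:ℝ)*η + (d:ℝ)*β := by
      have h1 := hLP' (fun i => if i = i0 then 1 else if i = i1 then 0 else 0)
                      (fun i => if i = i0 then 1 else if i = i1 then 0 else 0)
      rw [form_brauer] at h1
      simp only [prodVec, hconj, hsum] at h1
      norm_num at h1
      rw [show (1 - (η:ℂ) - β)/(d:ℂ)^2 + (η:ℂ)/(d:ℂ) + (β:ℂ)/(d:ℂ)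
          = (((1-η-β)/(d:ℝ)^2 + η/(d:ℝ) + β/(d:ℝ) : ℝ) : ℂ) by push_cast; ring,
        Complex.zero_le_real] at h1
      have h2 : (0:ℝ) < (d:ℝ)^2 := by positivity
      have key : 1 - η - β + (d:ℝ)*η + (d:ℝ)*β
          = ((1-η-β)/(d:ℝ)^2 + η/(d:ℝ) + β/(d:ℝ)) * (d:ℝ)^2 := by field_simp
      rw [key]
      exact mul_nonneg h1 h2.le
    have hB : 0 ≤ (1 - η - β) + (d:ℝ)*η := by
      have h1 := hLP' (fun i => if i = i0 then 1 else if i = i1 then Complex.I else 0)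
                      (fun i => if i = i0 then 1 else if i = i1 then Complex.I else 0)
      rw [form_brauer] at h1
      simp only [prodVec, hconj, hsum] at h1
      norm_num [Complex.conj_I, Complex.I_mul_I] at h1
      rw [show (1 - (η:ℂ) - β)/(d:ℂ)^2 * 4 + (η:ℂ)/(d:ℂ) * 4
          = (((1-η-β)/(d:ℝ)^2 * 4 + η/(d:ℝ) * 4 : ℝ) : ℂ) by push_cast; ring,
        Complex.zero_le_real] at h1
      have key : 1 - η - β + (d:ℝ)*η
          = ((1-η-β)/(d:ℝ)^2 * 4 + η/(d:ℝ) * 4) * ((d:ℝ)^2/4) := by field_simp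
      rw [key]
      exact mul_nonneg h1 (by positivity)
    have hC : 0 ≤ (1 - η - β) + (d:ℝ)*β := by
      have h1 := hLP' (fun i => if i = i0 then 1 else if i = i1 then -Complex.I else 0)
                      (fun i => if i = i0 then 1 else if i = i1 then Complex.I else 0)
      rw [form_brauer] at h1
      simp only [prodVec, hconj, hsum] at h1
      norm_num [Complex.conj_I, Complex.I_mul_I] at h1
      rw [show (1 - (η:ℂ) - β)/(d:ℂ)^2 * 4 + (β:ℂ)/(d:ℂ) * 4
          = (((1-η-β)/(d:ℝ)^2 * 4 + β/(d:ℝ) * 4 : ℝ) : ℂ) by push_cast; ring,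
        Complex.zero_le_real] at h1
      have key : 1 - η - β + (d:ℝ)*β
          = ((1-η-β)/(d:ℝ)^2 * 4 + β/(d:ℝ) * 4) * ((d:ℝ)^2/4) := by field_simp
      rw [key]
      exact mul_nonneg h1 (by positivity)
    -- construction of the decomposition
    classical
    set D := (d:ℝ) with hDdef
    set lam1 := max β 0 with hlam1
    set lam4 := max 0 (-(D-1)*β) with hlam4
    set lam2 := (1-η-β)*(D-1)/D - lam4 with hlam2
    set lam3 := η + lam2/(D-1) with hlam3
    have hl1 : 0 ≤ lam1 := le_max_right _ _
    have hl4 : 0 ≤ lam4 := le_max_left _ _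
    have hl2 : 0 ≤ lam2 := by
      rw [hlam2, sub_nonneg, hlam4]
      apply max_le
      · apply div_nonneg (mul_nonneg hA (by linarith)) (by linarith)
      · rw [le_div_iff₀ hD0]
        nlinarith [hC, hD1]
    have hl3 : 0 ≤ lam3 := by
      rcases le_or_gt 0 β with hb | hb
      · have h4 : lam4 = 0 := by rw [hlam4]; exact max_eq_left (by nlinarith)
        have expr : lam3 = (1 - η - β + D*η)/D := by
          rw [hlam3, hlam2, h4]; field_simp; ring
        rw [expr]
        exact div_nonneg (by linarith [hB]) (by linarith)
      · have h4 : lam4 = -(D-1)*β := by rw [hlam4]; exact max_eq_right (by nlinarith)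
        have expr : lam3 = (1 - η - β + D*(η+β))/D := by
          rw [hlam3, hlam2, h4]; field_simp; ring
        rw [expr]
        exact div_nonneg (by linarith [hD]) (by linarith)
    have hsum : lam1 + lam2 + lam3 + lam4 = 1 := by
      rcases le_or_gt 0 β with hb | hb
      · have h4 : lam4 = 0 := by rw [hlam4]; exact max_eq_left (by nlinarith)
        have h1' : lam1 = β := by rw [hlam1]; exact max_eq_left hb
        rw [hlam3, hlam2, h4, h1']
        field_simp
        ring
      · have h4 : lam4 = -(D-1)*β := by rw [hlam4]; exact max_eq_right (by nlinarith)
        have h1' : lam1 = 0 := by rw [hlam1]; exact max_eq_right hb.le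
        rw [hlam3, hlam2, h4, h1']
        field_simp
        ring
    have heq1 : lam3 - lam2/(D-1) = η := by rw [hlam3]; ring
    have heq2 : lam1 - lam4/(D-1) = β := by
      rcases le_or_gt 0 β with hb | hb
      · have h4 : lam4 = 0 := by rw [hlam4]; exact max_eq_left (by nlinarith)
        have h1' : lam1 = β := by rw [hlam1]; exact max_eq_left hb
        rw [h4, h1']; simp
      · have h4 : lam4 = -(D-1)*β := by rw [hlam4]; exact max_eq_right (by nlinarith)
        have h1' : lam1 = 0 := by rw [hlam1]; exact max_eq_right hb.le
        rw [h4, h1']; field_simp; ring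
    set t := lam1 + lam2 with htdef
    have ht0 : 0 ≤ t := by linarith
    have ht1 : t ≤ 1 := by linarith
    set α₁ := if t = 0 then (0:ℝ) else lam1/t with hα₁
    set γ := if 1 - t = 0 then (1:ℝ) else lam3/(1-t) with hγ
    have hα₁0 : 0 ≤ α₁ := by
      rw [hα₁]; split_ifs with h
      · norm_num
      · exact div_nonneg hl1 ht0
    have hα₁1 : α₁ ≤ 1 := by
      rw [hα₁]; split_ifs with h
      · norm_num
      · rw [div_le_one (lt_of_le_of_ne ht0 (Ne.symm h))]; linarith
    have hγ0 : 0 ≤ γ := by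
      rw [hγ]; split_ifs with h
      · norm_num
      · exact div_nonneg hl3 (by rcases lt_or_eq_of_le ht1 with h'|h'; linarith; exact absurd (by linarith) h)
    have hγ1 : γ ≤ 1 := by
      rw [hγ]; split_ifs with h
      · norm_num
      · have hpos : 0 < 1 - t := lt_of_le_of_ne (by linarith) (Ne.symm h)
        rw [div_le_one hpos]; linarith
    refine ⟨t, -(1 - α₁)/((d:ℝ)-1), α₁, γ, -(1-γ)/((d:ℝ)-1), ht0, ht1,
      seg_psd hd hα₁0 hα₁1, ?_, ?_⟩
    · rw [ptransposeA_brauer]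
      exact seg_psd hd hγ0 hγ1
    · refine brauer_combo d t (1-t) _ _ _ _ η β (by ring) ?_ ?_
      · -- t * (-(1 - α₁)/(D-1)) + (1-t) * γ = η
        by_cases h0 : t = 0
        · have hl10 : lam1 = 0 := by linarith [hl1, hl2, show lam1 + lam2 = 0 from by rw [← htdef, h0]]
          have hl20 : lam2 = 0 := by linarith [hl1, hl2, show lam1 + lam2 = 0 from by rw [← htdef, h0]]
          have h1t : (1:ℝ) - t ≠ 0 := by rw [h0]; norm_num
          rw [h0, hγ, if_neg h1t, h0]
          simp only [zero_mul, zero_add, sub_zero, one_mul, div_one]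
          rw [← heq1, hl20]
          simp
        · by_cases h1 : (1:ℝ) - t = 0
          · have hl30 : lam3 = 0 := by linarith [hl3, hl4, show lam3 + lam4 = 1 - t from by linarith]
            rw [hα₁, if_neg h0, hγ, h1]
            simp only [zero_mul, add_zero, mul_zero]
            have htne : t = 1 := by linarith
            rw [htne]
            have : lam1 + lam2 = 1 := by rw [← htdef, htne]
            rw [show -(1 - lam1/1)/(D-1) = -(lam2)/(D-1) by rw [div_one]; congr 1; linarith]
            rw [one_mul, neg_div, ← heq1, hl30]
            ring
          · have htpos : (0:ℝ) < t := lt_of_le_of_ne ht0 (Ne.symm h0)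
            have hspos : (0:ℝ) < 1 - t := lt_of_le_of_ne (by linarith) (Ne.symm h1)
            rw [hα₁, if_neg h0, hγ, if_neg h1]
            have e1 : t * (-(1 - lam1 / t)/(D-1)) = -(lam2)/(D-1) := by
              rw [← mul_div_assoc]
              congr 1
              have : t * (1 - lam1/t) = t - lam1 := by field_simp
              rw [mul_neg, this]
              congr 1
              rw [htdef]; ring
            have e2 : (1 - t) * (lam3/(1-t)) = lam3 := by field_simp
            rw [e1, e2, neg_div]
            linarith [heq1]
      · -- t * α₁ + (1-t) * (-(1-γ)/(D-1)) = β
        by_cases h0 : t = 0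
        · have hl10 : lam1 = 0 := by linarith [hl1, hl2, show lam1 + lam2 = 0 from by rw [← htdef, h0]]
          have h1t : (1:ℝ) - t ≠ 0 := by rw [h0]; norm_num
          rw [h0, hγ, if_neg h1t, h0]
          simp only [zero_mul, zero_add, sub_zero, one_mul, div_one]
          have h34 : lam3 + lam4 = 1 := by linarith [hsum, show lam1 + lam2 = 0 from by rw [← htdef, h0], hl1, hl2]
          rw [show -(1 - lam3)/(D-1) = -(lam4)/(D-1) by congr 1; linarith]
          rw [neg_div]
          linarith [heq2, hl10]
        · by_cases h1 : (1:ℝ) - t = 0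
          · have hl40 : lam4 = 0 := by linarith [hl3, hl4, show lam3 + lam4 = 1 - t from by linarith]
            rw [hα₁, if_neg h0, h1]
            simp only [zero_mul, add_zero]
            have htne : t = 1 := by linarith
            rw [htne, one_mul, div_one]
            have := heq2
            rw [hl40] at this
            simp at this
            linarith
          · have htpos : (0:ℝ) < t := lt_of_le_of_ne ht0 (Ne.symm h0)
            have hspos : (0:ℝ) < 1 - t := lt_of_le_of_ne (by linarith) (Ne.symm h1)
            rw [hα₁, if_neg h0, hγ, if_neg h1]
            have e1 : t * (lam1/t) = lam1 := by field_simp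
            have e2 : (1-t) * (-(1 - lam3/(1-t))/(D-1)) = -(lam4)/(D-1) := by
              rw [← mul_div_assoc]
              congr 1
              have : (1-t) * (1 - lam3/(1-t)) = (1-t) - lam3 := by field_simp
              rw [mul_neg, this]
              congr 1
              have : lam3 + lam4 = 1 - t := by linarith
              linarith
            rw [e1, e2, neg_div]
            linarith [heq2]
  · -- backward direction
    rintro ⟨t, η₁, β₁, η₂, β₂, ht0, ht1, hP1, hP2, hEq⟩
    intro ψ φ
    show 0 ≤ star (prodVec ψ φ) ⬝ᵥ brauer d η β *ᵥ prodVec ψ φ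
    rw [hEq, add_mulVec, smul_mulVec, smul_mulVec, dotProduct_add,
      dotProduct_smul, dotProduct_smul, Complex.real_smul, Complex.real_smul]
    have h2 : 0 ≤ star (prodVec ψ φ) ⬝ᵥ brauer d η₂ β₂ *ᵥ prodVec ψ φ := by
      rw [form_ptA]
      exact hP2.dotProduct_mulVec_nonneg _
    exact add_nonneg (mul_nonneg (Complex.zero_le_real.mpr ht0) (hP1.dotProduct_mulVec_nonneg _))
      (mul_nonneg (Complex.zero_le_real.mpr (by linarith)) h2)
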